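/- Let u, l ∈ ℝ^T be valid UL-parameters (zero-extension of u concave, nonnegative, increasing; zero-extension of l convex, nonnegative, increasing; the sum of the zero-extension of u and the reversed zero-extension of l is increasing). Then the constant power signal p with p_t = u_T/(T·Δt) for all t satisfies: for every subset S ⊆ {1,...,T} with |S| = k, l_k ≤ Δt·∑_{t∈S} p_t ≤ u_k. In particular the UL-flexibility set F(u,l) is nonempty. -/

import Mathlib

open Finset

noncomputable section

/-- The UL-flexibility set: all signals `p` such that for every nonempty
subset `S` of time indices with `|S| = k`, `l k ≤ Δt * ∑_{t∈S} p t ≤ u k`. -/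
def ULset (T : ℕ) (Δt : ℝ) (u l : ℕ → ℝ) : Set (Fin T → ℝ) :=
  {p | ∀ S : Finset (Fin T), S.Nonempty →
    l S.card ≤ Δt * ∑ t ∈ S, p t ∧ Δt * ∑ t ∈ S, p t ≤ u S.card}

/-- Zero extension of a parameter vector: value 0 at index 0. -/
def ZExt (v : ℕ → ℝ) : ℕ → ℝ := fun k => if k = 0 then 0 else v k

/-- Valid UL parameters: the zero-extension of `u` is concave, nonnegative and
increasing; the zero-extension of `l` is convex, nonnegative and increasing; and
the zero-extension of `u` plus the reversed zero-extension of `l` is increasing. -/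
def ValidUL (T : ℕ) (u l : ℕ → ℝ) : Prop :=
  (∀ j, 1 ≤ j → j + 1 ≤ T → ZExt u (j - 1) + ZExt u (j + 1) ≤ 2 * ZExt u j) ∧
  (∀ k, k ≤ T → 0 ≤ ZExt u k) ∧
  (∀ j, j + 1 ≤ T → ZExt u j ≤ ZExt u (j + 1)) ∧
  (∀ j, 1 ≤ j → j + 1 ≤ T → 2 * ZExt l j ≤ ZExt l (j - 1) + ZExt l (j + 1)) ∧
  (∀ k, k ≤ T → 0 ≤ ZExt l k) ∧
  (∀ j, j + 1 ≤ T → ZExt l j ≤ ZExt l (j + 1)) ∧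
  (∀ j, 1 ≤ j → j ≤ T →
    ZExt l (T - j + 1) - ZExt l (T - j) ≤ ZExt u j - ZExt u (j - 1))

/-- Vertex candidate `p^(k)` (0-based time index `t` corresponds to paper index `t+1`). -/
def ULvertex (T : ℕ) (Δt : ℝ) (u l : ℕ → ℝ) (k : ℕ) : Fin T → ℝ :=
  fun t => if (t : ℕ) < k then (ZExt u ((t : ℕ) + 1) - ZExt u (t : ℕ)) / Δt
           else (ZExt l (T - (t : ℕ)) - ZExt l (T - (t : ℕ) - 1)) / Δt

/-- Averaging lemma for antitone difference sequences. -/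
lemma key_antitone (d : ℕ → ℝ) (m k : ℕ) (hk : k ≤ m)
    (hmono : ∀ i j, i ≤ j → j + 1 ≤ m → d j ≤ d i) :
    (k : ℝ) * ∑ j ∈ range m, d j ≤ (m : ℝ) * ∑ j ∈ range k, d j := by
  rcases Nat.eq_zero_or_pos k with rfl | hk0
  · simp
  obtain ⟨n, rfl⟩ : ∃ n, k = n + 1 := ⟨k - 1, by omega⟩
  set b := d n with hb
  have hA : ((n + 1 : ℕ) : ℝ) * b ≤ ∑ j ∈ range (n + 1), d j := by
    have := Finset.card_nsmul_le_sum (range (n + 1)) d b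
      (fun j hj => hmono j n (by simpa using Nat.lt_succ_iff.mp (mem_range.mp hj)) (by omega))
    simpa [nsmul_eq_mul] using this
  have hB : ∑ j ∈ Ico (n + 1) m, d j ≤ ((m - (n + 1) : ℕ) : ℝ) * b := by
    have := Finset.sum_le_card_nsmul (Ico (n + 1) m) d b
      (fun j hj => hmono n j (by have := (mem_Ico.mp hj).1; omega)
        (by have := (mem_Ico.mp hj).2; omega))
    simpa [nsmul_eq_mul, Nat.card_Ico] using this
  have hsplit : ∑ j ∈ range m, d j = ∑ j ∈ range (n + 1), d j + ∑ j ∈ Ico (n + 1) m, d j := by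
    rw [range_eq_Ico, range_eq_Ico]
    exact (Finset.sum_Ico_consecutive d (Nat.zero_le _) hk).symm
  have hcast : ((m - (n + 1) : ℕ) : ℝ) = (m : ℝ) - ((n + 1 : ℕ) : ℝ) := by
    rw [Nat.cast_sub hk]
  rw [hsplit]
  set A := ∑ j ∈ range (n + 1), d j
  set B := ∑ j ∈ Ico (n + 1) m, d j
  have h1 : (0:ℝ) ≤ ((n+1:ℕ):ℝ) := by positivity
  have h2 : ((n+1:ℕ):ℝ) ≤ (m:ℝ) := by exact_mod_cast hk
  rw [hcast] at hB
  nlinarith [mul_le_mul_of_nonneg_left hB h1,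
    mul_le_mul_of_nonneg_left hA (by linarith : (0:ℝ) ≤ (m:ℝ) - ((n+1:ℕ):ℝ))]

/-- Averaging lemma for monotone difference sequences. -/
lemma key_monotone (d : ℕ → ℝ) (m k : ℕ) (hk : k ≤ m)
    (hmono : ∀ i j, i ≤ j → j + 1 ≤ m → d i ≤ d j) :
    (m : ℝ) * ∑ j ∈ range k, d j ≤ (k : ℝ) * ∑ j ∈ range m, d j := by
  have := key_antitone (fun j => -d j) m k hk
    (fun i j hij hj => by simpa using neg_le_neg (hmono i j hij hj))
  simp only [Finset.sum_neg_distrib, mul_neg] at this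
  linarith

/-- For valid UL-parameters, the constant signal `c = u T / (T·Δt)`
satisfies all subset-sum constraints; in particular `F(u,l)` is nonempty. -/
theorem const_mem_ULset (T : ℕ) (hT : 1 ≤ T) (Δt : ℝ) (hΔt : 0 < Δt) (u l : ℕ → ℝ)
    (hvalid : ValidUL T u l) :
    ((fun _ : Fin T => u T / (T * Δt)) ∈ ULset T Δt u l) ∧
      (ULset T Δt u l).Nonempty := by
  obtain ⟨hu_conc, hu_nn, hu_inc, hl_conv, hl_nn, hl_inc, hcross⟩ := hvalid
  set du : ℕ → ℝ := fun j => ZExt u (j + 1) - ZExt u j with hdu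
  set dl : ℕ → ℝ := fun j => ZExt l (j + 1) - ZExt l j with hdl
  have hduanti : ∀ i j, i ≤ j → j + 1 ≤ T → du j ≤ du i := by
    intro i j hij hjT
    induction j with
    | zero =>
      have : i = 0 := by omega
      subst this; exact le_refl _
    | succ n ih =>
      rcases Nat.eq_or_lt_of_le hij with rfl | hlt
      · exact le_refl _
      · have hstep : du (n + 1) ≤ du n := by
          have := hu_conc (n + 1) (by omega) (by omega)
          simp only [Nat.add_sub_cancel] at this
          simp only [hdu]; linarith
        exact hstep.trans (ih (by omega) (by omega))
  have hdlmono : ∀ i j, i ≤ j → j + 1 ≤ T → dl i ≤ dl j := by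
    intro i j hij hjT
    induction j with
    | zero =>
      have : i = 0 := by omega
      subst this; exact le_refl _
    | succ n ih =>
      rcases Nat.eq_or_lt_of_le hij with rfl | hlt
      · exact le_refl _
      · have hstep : dl n ≤ dl (n + 1) := by
          have := hl_conv (n + 1) (by omega) (by omega)
          simp only [Nat.add_sub_cancel] at this
          simp only [hdl]; linarith
        exact (ih (by omega) (by omega)).trans hstep
  have hsum_u : ∀ k, ∑ j ∈ range k, du j = ZExt u k := by
    intro k
    simp only [hdu]
    rw [Finset.sum_range_sub (fun j => ZExt u j)]
    simp [ZExt]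
  have hsum_l : ∀ k, ∑ j ∈ range k, dl j = ZExt l k := by
    intro k
    simp only [hdl]
    rw [Finset.sum_range_sub (fun j => ZExt l j)]
    simp [ZExt]
  have hlu : ∀ n, n ≤ T → ZExt l T - ZExt l (T - n) ≤ ZExt u n := by
    intro n hn
    induction n with
    | zero => simp [ZExt]
    | succ m ih =>
      have h7 := hcross (m + 1) (by omega) hn
      have e1 : T - (m + 1) + 1 = T - m := by omega
      have e2 : m + 1 - 1 = m := by omega
      rw [e1, e2] at h7
      have := ih (by omega)
      linarith
  have hlTuT : ZExt l T ≤ ZExt u T := by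
    have h := hlu T (le_refl T)
    have e : T - T = 0 := Nat.sub_self T
    rw [e] at h
    have h0 : ZExt l 0 = 0 := by simp [ZExt]
    rw [h0] at h
    linarith
  have hup : ∀ k, 1 ≤ k → k ≤ T → (k : ℝ) * u T ≤ (T : ℝ) * u k := by
    intro k hk1 hkT
    have h := key_antitone du T k hkT (fun i j hij hj => hduanti i j hij hj)
    rw [hsum_u, hsum_u] at h
    have eu : ZExt u k = u k := by rw [ZExt]; rw [if_neg (by omega)]
    have euT : ZExt u T = u T := by rw [ZExt]; rw [if_neg (by omega)]
    rwa [eu, euT] at h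
  have hlow : ∀ k, 1 ≤ k → k ≤ T → (T : ℝ) * l k ≤ (k : ℝ) * u T := by
    intro k hk1 hkT
    have h1 := key_monotone dl T k hkT (fun i j hij hj => hdlmono i j hij hj)
    rw [hsum_l, hsum_l] at h1
    have el : ZExt l k = l k := by rw [ZExt]; rw [if_neg (by omega)]
    have elT : ZExt l T = l T := by rw [ZExt]; rw [if_neg (by omega)]
    have euT : ZExt u T = u T := by rw [ZExt]; rw [if_neg (by omega)]
    rw [el, elT] at h1
    rw [elT, euT] at hlTuT
    have h2 : (k : ℝ) * l T ≤ (k : ℝ) * u T :=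
      mul_le_mul_of_nonneg_left hlTuT (by positivity)
    linarith
  have hTpos : (0:ℝ) < (T:ℝ) := by exact_mod_cast hT
  have hmem : (fun _ : Fin T => u T / (T * Δt)) ∈ ULset T Δt u l := by
    intro S hS
    have hk1 : 1 ≤ S.card := Finset.card_pos.mpr hS
    have hkT : S.card ≤ T := by simpa using Finset.card_le_univ S
    set k := S.card with hkdef
    have hsum : Δt * ∑ _t ∈ S, u T / ((T:ℝ) * Δt) = (k : ℝ) * u T / T := by
      rw [Finset.sum_const, nsmul_eq_mul]
      field_simp
      ring
    rw [show (Δt * ∑ _t ∈ S, u T / ((T:ℝ) * Δt)) = (k : ℝ) * u T / T from hsum]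
    constructor
    · rw [le_div_iff₀ hTpos]
      have := hlow k hk1 hkT
      linarith
    · rw [div_le_iff₀ hTpos]
      have := hup k hk1 hkT
      linarith
  exact ⟨hmem, ⟨_, hmem⟩⟩
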